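/- arXiv:1805.00897 — 2 statements merged into one kernel-verified Lean document; each statement's English description precedes it below -/
import Mathlib

section
/- Let Q be a symmetric positive semidefinite 3×3 real matrix such that ½(tr(Q) I₃ − Q) is positive definite, let b ∈ ℝ³, d > 0, and set 𝔸 := [Q + b bᵀ/d, b; bᵀ, d] (a symmetric 4×4 matrix). Then for g = [R, p; 0, 1] ∈ SE(3), one has ℙ((I₄ − g⁻¹) 𝔸) = 0 (equivalently, g 𝔸 = 𝔸 gᵀ) if and only if either g = I₄, or there exists a unit vector v with Qv = λv for some λ ∈ ℝ such that R = 2 v vᵀ − I₃ and p = (I₃ − R) b d⁻¹. -/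
open Matrix BigOperators

noncomputable section

abbrev V3 : Type := Fin 3 → ℝ
abbrev V4 : Type := (Fin 3 ⊕ Fin 1) → ℝ
abbrev V6 : Type := (Fin 3 → ℝ) × (Fin 3 → ℝ)
abbrev M3 : Type := Matrix (Fin 3) (Fin 3) ℝ
abbrev M4 : Type := Matrix (Fin 3 ⊕ Fin 1) (Fin 3 ⊕ Fin 1) ℝ

/-- cross product on ℝ³ -/
def cross (x y : V3) : V3 := crossProduct x y

/-- skew-symmetric matrix `x^×` with `x^× y = x × y` -/
def skew (x : V3) : M3 := !![0, -x 2, x 1; x 2, 0, -x 0; -x 1, x 0, 0]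

/-- rank-one matrix `x yᵀ` -/
def outer (x y : V3) : M3 := Matrix.vecMulVec x y

/-- `R` is a rotation matrix -/
def isRot (R : M3) : Prop := Rᵀ * R = 1 ∧ R.det = 1

def colV (p : V3) : Matrix (Fin 3) (Fin 1) ℝ := Matrix.of fun i _ => p i
def rowV (p : V3) : Matrix (Fin 1) (Fin 3) ℝ := Matrix.of fun _ j => p j

/-- homogeneous matrix `[R, p; 0, 1]` -/
def SE3mat (R : M3) (p : V3) : M4 := Matrix.fromBlocks R (colV p) 0 1

/-- membership in SE(3) -/
def inSE3 (g : M4) : Prop := ∃ R p, isRot R ∧ g = SE3mat R p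

/-- vector part of an element of ℝ⁴ -/
def vpart (r : V4) : V3 := fun i => r (Sum.inl i)
/-- scalar part of an element of ℝ⁴ -/
def spart (r : V4) : ℝ := r (Sum.inr 0)

/-- wedge product `b ∧ r := (b_v × r_v, b_s r_v − r_s b_v) ∈ ℝ⁶` -/
def wedge (b r : V4) : V6 :=
  (cross (vpart b) (vpart r), spart b • vpart r - spart r • vpart b)

/-- `ψ_a(A) := ½(a₃₂ − a₂₃, a₁₃ − a₃₁, a₂₁ − a₁₂)` -/
def psia (A : M3) : V3 :=
  ![(A 2 1 - A 1 2) / 2, (A 0 2 - A 2 0) / 2, (A 1 0 - A 0 1) / 2]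

/-- `ψ([A, b; c, d]) := (ψ_a(A), ½ b) ∈ ℝ⁶` -/
def psi (M : M4) : V6 :=
  (psia M.toBlocks₁₁, fun i => M (Sum.inl i) (Sum.inr 0) / 2)

/-- `ℙ([A, b; c, d]) := [(A − Aᵀ)/2, b; 0, 0]` -/
def Pproj (M : M4) : M4 :=
  Matrix.fromBlocks ((1 / 2 : ℝ) • (M.toBlocks₁₁ - M.toBlocks₁₁ᵀ)) M.toBlocks₁₂ 0 0

/-- `Ad*_g = [Rᵀ, −Rᵀ p^×; 0, Rᵀ]` acting on ℝ⁶, for `g = [R, p; 0, 1]` -/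
def AdStar (g : M4) (ξ : V6) : V6 :=
  ((g.toBlocks₁₁)ᵀ.mulVec (ξ.1 - cross (fun i => g (Sum.inl i) (Sum.inr 0)) ξ.2),
   (g.toBlocks₁₁)ᵀ.mulVec ξ.2)

/-- `(ω, v)^∧ := [ω^×, v; 0, 0]` -/
def hat (ξ : V6) : M4 := Matrix.fromBlocks (skew ξ.1) (colV ξ.2) 0 0

/-- squared Euclidean norm on ℝ³ -/
def sq3 (x : V3) : ℝ := ∑ i, x i ^ 2
/-- squared Euclidean norm on ℝ⁴ -/
def sq4 (x : V4) : ℝ := ∑ i, x i ^ 2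
/-- squared Euclidean norm on ℝ⁶ -/
def sq6 (ξ : V6) : ℝ := sq3 ξ.1 + sq3 ξ.2
/-- squared Frobenius norm of a 4×4 matrix -/
def frob4 (M : M4) : ℝ := ∑ i, ∑ j, M i j ^ 2
/-- squared Frobenius norm of a 3×3 matrix -/
def frob3 (M : M3) : ℝ := ∑ i, ∑ j, M i j ^ 2

/-- membership in `𝓜₀` (last row zero, block form `[M₁, m₂; 0, 0]`) -/
def inM0 (M : M4) : Prop := ∃ (M₁ : M3) (m₂ : V3), M = Matrix.fromBlocks M₁ (colV m₂) 0 0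

/-- `Δ_Q(u, v) := uᵀ((tr(Q) − 2 vᵀQv) I₃ − Q + 2 Q v vᵀ) u` -/
def DeltaQ (Q : M3) (u v : V3) : ℝ :=
  u ⬝ᵥ Matrix.mulVec
    ((Q.trace - 2 * (v ⬝ᵥ Q.mulVec v)) • (1 : M3) - Q + (2 : ℝ) • (Q * outer v v)) u

/-- angle-axis rotation `R_a(θ, u) = I₃ + sin θ · u^× + (1 − cos θ)(u^×)²` -/
def Ra (θ : ℝ) (u : V3) : M3 :=
  1 + Real.sin θ • skew u + (1 - Real.cos θ) • (skew u * skew u)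


section AuxLemmas

lemma fin3cases (k : Fin 3) : k = 0 ∨ k = 1 ∨ k = 2 := by fin_cases k <;> simp

lemma colV_eq_zero {x : V3} : colV x = 0 ↔ x = 0 := by
  constructor
  · intro h; funext i; exact congrFun (congrFun h i) 0
  · intro h; subst h; ext i j; simp [colV]

lemma mul_colV (M : M3) (x : V3) : M * colV x = colV (M.mulVec x) := by
  ext i j; simp [colV, Matrix.mul_apply, Matrix.mulVec, dotProduct]

lemma colV_mul_rowV (x y : V3) : colV x * rowV y = Matrix.vecMulVec x y := by
  ext i j; simp [colV, rowV, Matrix.vecMulVec_apply, Matrix.mul_apply]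

lemma colV_mul_scalar (x : V3) (d : ℝ) :
    colV x * (Matrix.of fun _ _ => d : Matrix (Fin 1) (Fin 1) ℝ) = colV (d • x) := by
  ext i j; simp [colV, Matrix.mul_apply, mul_comm]

lemma colV_neg (x : V3) : colV (-x) = - colV x := by
  ext i j; simp [colV]

lemma mul_vmv (M : M3) (u w : V3) :
    M * Matrix.vecMulVec u w = Matrix.vecMulVec (M.mulVec u) w := by
  ext i j
  simp [Matrix.vecMulVec_apply, Matrix.mul_apply, Matrix.mulVec, dotProduct,
    Finset.sum_mul]
  exact Finset.sum_congr rfl fun k _ => by ring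

lemma vmv_mul (u w : V3) (M : M3) :
    Matrix.vecMulVec u w * M = Matrix.vecMulVec u (Mᵀ.mulVec w) := by
  ext i j
  simp [Matrix.vecMulVec_apply, Matrix.mul_apply, Matrix.mulVec, dotProduct,
    Finset.mul_sum]
  exact Finset.sum_congr rfl fun k _ => by ring

lemma vmv_mulVec (u w x : V3) : (Matrix.vecMulVec u w).mulVec x = (w ⬝ᵥ x) • u := by
  funext i
  simp [Matrix.vecMulVec_apply, Matrix.mulVec, dotProduct, Finset.sum_mul]
  exact Finset.sum_congr rfl fun k _ => by ring

lemma vmv_transpose (u w : V3) : (Matrix.vecMulVec u w)ᵀ = Matrix.vecMulVec w u := by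
  ext i j; simp [Matrix.vecMulVec_apply, mul_comm]

lemma vmv_smul_left (c : ℝ) (u w : V3) :
    Matrix.vecMulVec (c • u) w = c • Matrix.vecMulVec u w := by
  ext i j; simp [Matrix.vecMulVec_apply]; ring

lemma vmv_smul_right (c : ℝ) (u w : V3) :
    Matrix.vecMulVec u (c • w) = c • Matrix.vecMulVec u w := by
  ext i j; simp [Matrix.vecMulVec_apply]; ring

lemma ch3 (M : M3) : M*M*M - M.trace • (M*M) + ((M.trace^2 - (M*M).trace)/2) • M
    - M.det • (1:M3) = 0 := by
  ext i j
  fin_cases i <;> fin_cases j <;>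
    simp [Matrix.mul_apply, Matrix.trace, Matrix.det_fin_three, Fin.sum_univ_three,
      Matrix.one_apply, Matrix.diag] <;> ring

lemma fromBlocks_sub (A A' : M3) (B B' : Matrix (Fin 3) (Fin 1) ℝ)
    (C C' : Matrix (Fin 1) (Fin 3) ℝ) (D D' : Matrix (Fin 1) (Fin 1) ℝ) :
    Matrix.fromBlocks A B C D - Matrix.fromBlocks A' B' C' D' =
      Matrix.fromBlocks (A - A') (B - B') (C - C') (D - D') := by
  ext i j
  rcases i with i | i <;> rcases j with j | j <;> simp [Matrix.fromBlocks]

set_option maxHeartbeats 2000000 in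
lemma proj_rank1 (P : M3) (hsym : Pᵀ = P) (hP : P * P = P) (htr : P.trace = 1) :
    ∃ v : V3, v ⬝ᵥ v = 1 ∧ P = Matrix.vecMulVec v v := by
  have hp10 : P 1 0 = P 0 1 := by have := congrFun (congrFun hsym 1) 0; simpa using this.symm
  have hp20 : P 2 0 = P 0 2 := by have := congrFun (congrFun hsym 2) 0; simpa using this.symm
  have hp21 : P 2 1 = P 1 2 := by have := congrFun (congrFun hsym 2) 1; simpa using this.symm
  have htr' : P 0 0 + P 1 1 + P 2 2 = 1 := by
    rw [Matrix.trace_fin_three] at htr; linarith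
  have d0 := congrFun (congrFun hP 0) 0
  have d1 := congrFun (congrFun hP 1) 1
  have d2 := congrFun (congrFun hP 2) 2
  have o01 := congrFun (congrFun hP 0) 1
  have o02 := congrFun (congrFun hP 0) 2
  have o12 := congrFun (congrFun hP 1) 2
  simp only [Matrix.mul_apply, Fin.sum_univ_three, hp10, hp20, hp21] at d0 d1 d2 o01 o02 o12
  have m01 : P 0 1 * P 0 1 = P 0 0 * P 1 1 := by
    linear_combination (d0 + d1 - d2)/2 + ((P 2 2 - P 0 0 - P 1 1)/2) * htr'
  have m02 : P 0 2 * P 0 2 = P 0 0 * P 2 2 := by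
    linear_combination (d0 - d1 + d2)/2 + ((P 1 1 - P 0 0 - P 2 2)/2) * htr'
  have m12 : P 1 2 * P 1 2 = P 1 1 * P 2 2 := by
    linear_combination (- d0 + d1 + d2)/2 + ((P 0 0 - P 1 1 - P 2 2)/2) * htr'
  have c12 : P 1 2 * P 0 0 = P 0 1 * P 0 2 := by
    linear_combination - o12 + P 1 2 * htr'
  have c02 : P 0 2 * P 1 1 = P 0 1 * P 1 2 := by
    linear_combination - o02 + P 0 2 * htr'
  have c01 : P 0 1 * P 2 2 = P 0 2 * P 1 2 := by
    linear_combination - o01 + P 0 1 * htr'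
  have n0 : 0 ≤ P 0 0 := by nlinarith [sq_nonneg (P 0 1), sq_nonneg (P 0 2)]
  have n1 : 0 ≤ P 1 1 := by nlinarith [sq_nonneg (P 0 1), sq_nonneg (P 1 2)]
  have n2 : 0 ≤ P 2 2 := by nlinarith [sq_nonneg (P 0 2), sq_nonneg (P 1 2)]
  have hcase : (1:ℝ)/3 ≤ P 0 0 ∨ (1:ℝ)/3 ≤ P 1 1 ∨ (1:ℝ)/3 ≤ P 2 2 := by
    by_contra h; push_neg at h; linarith [h.1, h.2.1, h.2.2]
  rcases hcase with h | h | h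
  · have ha : (0:ℝ) < P 0 0 := by linarith
    have hane : P 0 0 ≠ 0 := ne_of_gt ha
    have hs0 : Real.sqrt (P 0 0) ≠ 0 := ne_of_gt (Real.sqrt_pos.mpr ha)
    have hs2 : Real.sqrt (P 0 0) * Real.sqrt (P 0 0) = P 0 0 := Real.mul_self_sqrt (le_of_lt ha)
    refine ⟨![Real.sqrt (P 0 0), P 0 1 / Real.sqrt (P 0 0), P 0 2 / Real.sqrt (P 0 0)], ?_, ?_⟩
    · simp only [dotProduct, Fin.sum_univ_three, Matrix.cons_val_zero,
        Matrix.cons_val_one, Matrix.head_cons, Matrix.cons_val_two, Matrix.tail_cons]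
      rw [div_mul_div_comm, div_mul_div_comm, hs2]
      field_simp
      linear_combination d0
    · ext i j
      rcases fin3cases i with rfl | rfl | rfl <;> rcases fin3cases j with rfl | rfl | rfl <;>
        simp only [Matrix.vecMulVec_apply, Matrix.cons_val_zero, Matrix.cons_val_one,
          Matrix.head_cons, Matrix.cons_val_two, Matrix.tail_cons]
      · exact hs2.symm
      · rw [mul_comm, div_mul_cancel₀ _ hs0]
      · rw [mul_comm, div_mul_cancel₀ _ hs0]
      · rw [div_mul_cancel₀ _ hs0, hp10]
      · rw [div_mul_div_comm, hs2, eq_div_iff hane]; linarith [m01]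
      · rw [div_mul_div_comm, hs2, eq_div_iff hane]; linarith [c12]
      · rw [div_mul_cancel₀ _ hs0, hp20]
      · rw [div_mul_div_comm, hs2, eq_div_iff hane, hp21]; linarith [c12]
      · rw [div_mul_div_comm, hs2, eq_div_iff hane]; linarith [m02]
  · have ha : (0:ℝ) < P 1 1 := by linarith
    have hane : P 1 1 ≠ 0 := ne_of_gt ha
    have hs0 : Real.sqrt (P 1 1) ≠ 0 := ne_of_gt (Real.sqrt_pos.mpr ha)
    have hs2 : Real.sqrt (P 1 1) * Real.sqrt (P 1 1) = P 1 1 := Real.mul_self_sqrt (le_of_lt ha)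
    refine ⟨![P 0 1 / Real.sqrt (P 1 1), Real.sqrt (P 1 1), P 1 2 / Real.sqrt (P 1 1)], ?_, ?_⟩
    · simp only [dotProduct, Fin.sum_univ_three, Matrix.cons_val_zero,
        Matrix.cons_val_one, Matrix.head_cons, Matrix.cons_val_two, Matrix.tail_cons]
      rw [div_mul_div_comm, div_mul_div_comm, hs2]
      field_simp
      linear_combination d1
    · ext i j
      rcases fin3cases i with rfl | rfl | rfl <;> rcases fin3cases j with rfl | rfl | rfl <;>
        simp only [Matrix.vecMulVec_apply, Matrix.cons_val_zero, Matrix.cons_val_one,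
          Matrix.head_cons, Matrix.cons_val_two, Matrix.tail_cons]
      · rw [div_mul_div_comm, hs2, eq_div_iff hane]; linarith [m01]
      · rw [div_mul_cancel₀ _ hs0]
      · rw [div_mul_div_comm, hs2, eq_div_iff hane]; linarith [c02]
      · rw [mul_comm, div_mul_cancel₀ _ hs0, hp10]
      · exact hs2.symm
      · rw [mul_comm, div_mul_cancel₀ _ hs0]
      · rw [div_mul_div_comm, hs2, eq_div_iff hane, hp20]; linarith [c02]
      · rw [div_mul_cancel₀ _ hs0, hp21]
      · rw [div_mul_div_comm, hs2, eq_div_iff hane]; linarith [m12]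
  · have ha : (0:ℝ) < P 2 2 := by linarith
    have hane : P 2 2 ≠ 0 := ne_of_gt ha
    have hs0 : Real.sqrt (P 2 2) ≠ 0 := ne_of_gt (Real.sqrt_pos.mpr ha)
    have hs2 : Real.sqrt (P 2 2) * Real.sqrt (P 2 2) = P 2 2 := Real.mul_self_sqrt (le_of_lt ha)
    refine ⟨![P 0 2 / Real.sqrt (P 2 2), P 1 2 / Real.sqrt (P 2 2), Real.sqrt (P 2 2)], ?_, ?_⟩
    · simp only [dotProduct, Fin.sum_univ_three, Matrix.cons_val_zero,
        Matrix.cons_val_one, Matrix.head_cons, Matrix.cons_val_two, Matrix.tail_cons]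
      rw [div_mul_div_comm, div_mul_div_comm, hs2]
      field_simp
      linear_combination d2
    · ext i j
      rcases fin3cases i with rfl | rfl | rfl <;> rcases fin3cases j with rfl | rfl | rfl <;>
        simp only [Matrix.vecMulVec_apply, Matrix.cons_val_zero, Matrix.cons_val_one,
          Matrix.head_cons, Matrix.cons_val_two, Matrix.tail_cons]
      · rw [div_mul_div_comm, hs2, eq_div_iff hane]; linarith [m02]
      · rw [div_mul_div_comm, hs2, eq_div_iff hane]; linarith [c01]
      · rw [div_mul_cancel₀ _ hs0]
      · rw [div_mul_div_comm, hs2, eq_div_iff hane, hp10]; linarith [c01]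
      · rw [div_mul_div_comm, hs2, eq_div_iff hane]; linarith [m12]
      · rw [div_mul_cancel₀ _ hs0]
      · rw [mul_comm, div_mul_cancel₀ _ hs0, hp20]
      · rw [mul_comm, div_mul_cancel₀ _ hs0, hp21]
      · exact hs2.symm

set_option maxHeartbeats 2000000 in
lemma classify (Q : M3) (hsym : Qᵀ = Q)
    (hpd : ∀ x : V3, x ≠ 0 → 0 < x ⬝ᵥ Matrix.mulVec ((1/2 : ℝ) • (Q.trace • (1:M3) - Q)) x)
    (R : M3) (hR : Rᵀ * R = 1) (hdet : R.det = 1) (hc : Rᵀ * Q = Q * R) :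
    R = 1 ∨ ∃ (v : V3) (lam : ℝ), v ⬝ᵥ v = 1 ∧ Q.mulVec v = lam • v ∧
      R = (2:ℝ) • Matrix.vecMulVec v v - 1 := by
  have hRRt : R * Rᵀ = 1 := mul_eq_one_comm.mp hR
  have h2 : R * Q = Q * Rᵀ := by
    have h : R * (Rᵀ * Q) * Rᵀ = R * (Q * R) * Rᵀ := by rw [hc]
    simp only [← Matrix.mul_assoc] at h
    rw [hRRt, one_mul] at h
    rw [Matrix.mul_assoc (R*Q) R Rᵀ, hRRt, mul_one] at h
    exact h.symm
  have hanti : Q*(R-Rᵀ) + (R-Rᵀ)*Q = 0 := by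
    have key : Q*(R-Rᵀ) + (R-Rᵀ)*Q = (Q*R - Rᵀ*Q) + (R*Q - Q*Rᵀ) := by noncomm_ring
    rw [key, hc, h2, sub_self, sub_self, add_zero]
  have hq10 : Q 0 1 = Q 1 0 := by have := congrFun (congrFun hsym 0) 1; simpa using this.symm
  have hq20 : Q 0 2 = Q 2 0 := by have := congrFun (congrFun hsym 0) 2; simpa using this.symm
  have hq21 : Q 1 2 = Q 2 1 := by have := congrFun (congrFun hsym 1) 2; simpa using this.symm
  have hw0 : (Q.trace • (1:M3) - Q).mulVec ![R 2 1 - R 1 2, R 0 2 - R 2 0, R 1 0 - R 0 1]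
      = 0 := by
    funext i
    fin_cases i
    · have e := congrFun (congrFun hanti 2) 1
      simp [Matrix.mul_apply, Fin.sum_univ_three, Matrix.transpose_apply] at e
      simp [Matrix.mulVec, dotProduct, Matrix.trace_fin_three, Fin.sum_univ_three,
        Matrix.one_apply]
      simp only [hq10, hq20, hq21] at e ⊢
      linarith [e]
    · have e := congrFun (congrFun hanti 0) 2
      simp [Matrix.mul_apply, Fin.sum_univ_three, Matrix.transpose_apply] at e
      simp [Matrix.mulVec, dotProduct, Matrix.trace_fin_three, Fin.sum_univ_three,
        Matrix.one_apply]
      simp only [hq10, hq20, hq21] at e ⊢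
      linarith [e]
    · have e := congrFun (congrFun hanti 1) 0
      simp [Matrix.mul_apply, Fin.sum_univ_three, Matrix.transpose_apply] at e
      simp [Matrix.mulVec, dotProduct, Matrix.trace_fin_three, Fin.sum_univ_three,
        Matrix.one_apply]
      simp only [hq10, hq20, hq21] at e ⊢
      linarith [e]
  have hwz : (![R 2 1 - R 1 2, R 0 2 - R 2 0, R 1 0 - R 0 1] : V3) = 0 := by
    by_contra hne
    have hp := hpd _ hne
    rw [Matrix.smul_mulVec, hw0, smul_zero, dotProduct_zero] at hp
    exact lt_irrefl 0 hp
  have e0 := congrFun hwz 0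
  have e1 := congrFun hwz 1
  have e2 := congrFun hwz 2
  simp only [Matrix.cons_val_zero, Matrix.cons_val_one, Matrix.head_cons,
    Matrix.cons_val_two, Matrix.tail_cons, Pi.zero_apply] at e0 e1 e2
  have hRsym : Rᵀ = R := by
    ext i j
    rcases fin3cases i with rfl|rfl|rfl <;> rcases fin3cases j with rfl|rfl|rfl <;>
      simp only [Matrix.transpose_apply] <;> linarith
  have hR2 : R * R = 1 := by nth_rewrite 1 [← hRsym]; exact hR
  have hch := ch3 R
  rw [hR2, hdet] at hch
  simp only [Matrix.trace_one, Fintype.card_fin, one_mul, one_smul, Nat.cast_ofNat] at hch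
  have hkey : ∀ i j : Fin 3,
      ((R.trace^2 - 1)/2) * R i j = (R.trace + 1) * (if i = j then (1:ℝ) else 0) := by
    intro i j
    have e := congrFun (congrFun hch i) j
    simp only [Matrix.sub_apply, Matrix.add_apply, Matrix.smul_apply, Matrix.one_apply,
      smul_eq_mul, Pi.zero_apply, Matrix.zero_apply] at e
    by_cases hij : i = j
    · rw [if_pos hij] at e ⊢; linarith [e]
    · rw [if_neg hij] at e ⊢; linarith [e]
  by_cases htq : R.trace = -1
  · -- reflection case
    have hPsym : ((1/2 : ℝ) • (R + 1) : M3)ᵀ = (1/2 : ℝ) • (R + 1) := by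
      rw [Matrix.transpose_smul, Matrix.transpose_add, Matrix.transpose_one, hRsym]
    have hRR1 : (R + 1) * (R + 1) = (2:ℝ) • (R + 1) := by
      rw [add_mul, mul_add, mul_add, hR2, mul_one, one_mul, one_mul, two_smul]
      abel
    have hPP : ((1/2 : ℝ) • (R + 1) : M3) * ((1/2 : ℝ) • (R + 1)) = (1/2 : ℝ) • (R + 1) := by
      rw [Matrix.smul_mul, Matrix.mul_smul, hRR1, smul_smul, smul_smul]
      norm_num
    have hPtr : ((1/2 : ℝ) • (R + 1) : M3).trace = 1 := by
      rw [Matrix.trace_smul, Matrix.trace_add, Matrix.trace_one, htq]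
      norm_num
    obtain ⟨v, hv1, hvP⟩ := proj_rank1 _ hPsym hPP hPtr
    have hR2P : R = (2:ℝ) • ((1/2 : ℝ) • (R + 1)) - 1 := by
      rw [smul_smul]; norm_num
    right
    have hcomm : Q * R = R * Q := by
      have := hc; rw [hRsym] at this; exact this.symm
    have hN : Q * Matrix.vecMulVec v v = Matrix.vecMulVec v v * Q := by
      have h3 : Q * ((2:ℝ) • Matrix.vecMulVec v v - 1) =
          ((2:ℝ) • Matrix.vecMulVec v v - 1) * Q := by
        rw [← hvP, ← hR2P]; exact hcomm
      rw [Matrix.mul_sub, Matrix.sub_mul, mul_one, one_mul, Matrix.mul_smul,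
        Matrix.smul_mul] at h3
      have h4 : (2:ℝ) • (Q * Matrix.vecMulVec v v) = (2:ℝ) • (Matrix.vecMulVec v v * Q) := by
        have := sub_left_inj.mp h3
        exact this
      exact smul_right_injective M3 (by norm_num : (2:ℝ) ≠ 0) h4
    refine ⟨v, v ⬝ᵥ Q.mulVec v, hv1, ?_, by rw [← hvP]; exact hR2P⟩
    have h5 : (Q * Matrix.vecMulVec v v).mulVec v = (Matrix.vecMulVec v v * Q).mulVec v := by
      rw [hN]
    rw [← Matrix.mulVec_mulVec, ← Matrix.mulVec_mulVec, vmv_mulVec, hv1, one_smul,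
      vmv_mulVec] at h5
    exact h5
  · -- R = 1
    left
    have hkne : (R.trace^2 - 1)/2 ≠ 0 := by
      intro h0
      have h00 := hkey 0 0
      rw [h0, zero_mul, if_pos rfl, mul_one] at h00
      exact htq (by linarith)
    have hod : ∀ i j : Fin 3, i ≠ j → R i j = 0 := by
      intro i j hij
      have h := hkey i j
      rw [if_neg hij, mul_zero] at h
      exact (mul_eq_zero.mp h).resolve_left hkne
    have hdiag : ∀ i : Fin 3, R i i = R 0 0 := by
      intro i
      have h1 := hkey i i
      have h0 := hkey 0 0
      rw [if_pos rfl, mul_one] at h1 h0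
      exact mul_left_cancel₀ hkne (h1.trans h0.symm)
    have hd3 : R 0 0 * (R 0 0 * R 0 0) = 1 := by
      rw [Matrix.det_fin_three] at hdet
      rw [hod 0 1 (by decide), hod 0 2 (by decide), hod 1 0 (by decide),
        hod 1 2 (by decide), hod 2 0 (by decide), hod 2 1 (by decide),
        hdiag 1, hdiag 2] at hdet
      linarith [hdet]
    have hsq := congrFun (congrFun hR2 0) 0
    simp only [Matrix.mul_apply, Fin.sum_univ_three, Matrix.one_apply_eq] at hsq
    rw [hod 0 1 (by decide), hod 0 2 (by decide), hod 1 0 (by decide),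
      hod 2 0 (by decide)] at hsq
    have hsq' : R 0 0 * R 0 0 = 1 := by linarith [hsq]
    have h001 : R 0 0 = 1 := by rw [hsq', mul_one] at hd3; exact hd3
    ext i j
    rcases fin3cases i with rfl|rfl|rfl <;> rcases fin3cases j with rfl|rfl|rfl <;>
      simp only [Matrix.one_apply, if_true, reduceIte] <;>
      first
        | (rw [hdiag]; exact h001)
        | (exact hod _ _ (by decide))

set_option maxHeartbeats 1000000 in
lemma key_iff (Q : M3) (hsym : Qᵀ = Q) (b : V3) (d : ℝ) (hd : 0 < d)
    (R : M3) (p : V3) (hR : Rᵀ * R = 1) :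
    Pproj ((1 - (SE3mat R p)⁻¹) * (Matrix.fromBlocks (Q + d⁻¹ • outer b b) (colV b) (rowV b)
      (Matrix.of fun _ _ => d))) = 0 ↔
    (Rᵀ * Q = Q * R ∧ p = (1 - R).mulVec (d⁻¹ • b)) := by
  have hdne : d ≠ 0 := ne_of_gt hd
  have hRRt : R * Rᵀ = 1 := mul_eq_one_comm.mp hR
  have hmul : SE3mat R p * SE3mat Rᵀ (-(Rᵀ.mulVec p)) = 1 := by
    rw [SE3mat, SE3mat, Matrix.fromBlocks_multiply]
    rw [mul_colV, Matrix.mulVec_neg, Matrix.mulVec_mulVec, hRRt, Matrix.one_mulVec, colV_neg]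
    simp only [Matrix.mul_one, Matrix.mul_zero, Matrix.zero_mul, Matrix.one_mul,
      add_zero, zero_add, hRRt, neg_add_cancel]
    exact Matrix.fromBlocks_one
  have hinv : (SE3mat R p)⁻¹ = SE3mat Rᵀ (-(Rᵀ.mulVec p)) := Matrix.inv_eq_right_inv hmul
  have hE : 1 - (SE3mat R p)⁻¹ =
      Matrix.fromBlocks (1 - Rᵀ) (colV (Rᵀ.mulVec p)) 0 0 := by
    rw [hinv, SE3mat, ← Matrix.fromBlocks_one (l := Fin 3) (m := Fin 1) (α := ℝ),
      fromBlocks_sub, colV_neg, sub_neg_eq_add, zero_add, sub_self, sub_self]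
  rw [hE, Matrix.fromBlocks_multiply]
  simp only [Matrix.zero_mul, Matrix.mul_zero, add_zero, zero_add, Matrix.mul_one]
  rw [Pproj, Matrix.toBlocks_fromBlocks₁₁, Matrix.toBlocks_fromBlocks₁₂]
  have hzero : (0 : M4) = Matrix.fromBlocks 0 0 0 0 := by
    ext i j
    rcases i with i | i <;> rcases j with j | j <;> simp
  rw [hzero, Matrix.fromBlocks_inj]
  have h12 : (1 - Rᵀ) * colV b + colV (Rᵀ.mulVec p) * (Matrix.of fun _ _ => d : Matrix (Fin 1) (Fin 1) ℝ) = 0 ↔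
      p = (1 - R).mulVec (d⁻¹ • b) := by
    rw [mul_colV, colV_mul_scalar]
    have hcomb : colV ((1 - Rᵀ).mulVec b) + colV (d • Rᵀ.mulVec p) =
        colV ((1 - Rᵀ).mulVec b + d • Rᵀ.mulVec p) := by
      ext i j; simp [colV]
    rw [hcomb, colV_eq_zero]
    constructor
    · intro h
      have h2 := congrArg (fun x => R.mulVec x) h
      simp only [Matrix.mulVec_add, Matrix.mulVec_smul, Matrix.mulVec_mulVec,
        Matrix.mulVec_zero] at h2
      rw [Matrix.mul_sub, Matrix.mul_one, hRRt] at h2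
      have h4 : d • p = (1 - R).mulVec b := by
        funext i
        have h5 := congrFun h2 i
        simp [Matrix.sub_mulVec, Matrix.one_mulVec] at h5 ⊢
        linarith
      have h6 : p = d⁻¹ • (d • p) := by
        rw [smul_smul, inv_mul_cancel₀ hdne, one_smul]
      rw [h6, h4, ← Matrix.mulVec_smul]
    · intro h
      rw [h, Matrix.mulVec_mulVec, Matrix.mul_sub, Matrix.mul_one, hR,
        Matrix.mulVec_smul, smul_smul, mul_inv_cancel₀ hdne, one_smul]
      rw [Matrix.sub_mulVec, Matrix.sub_mulVec, Matrix.one_mulVec]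
      abel
  have key2 : p = (1 - R).mulVec (d⁻¹ • b) →
      ((1 - Rᵀ) * (Q + d⁻¹ • outer b b) + colV (Rᵀ.mulVec p) * rowV b) -
        ((1 - Rᵀ) * (Q + d⁻¹ • outer b b) + colV (Rᵀ.mulVec p) * rowV b)ᵀ
      = Q * R - Rᵀ * Q := by
    intro hp
    have hRp : Rᵀ.mulVec p = d⁻¹ • ((Rᵀ - 1).mulVec b) := by
      rw [hp, Matrix.mulVec_mulVec, Matrix.mul_sub, Matrix.mul_one, hR, Matrix.mulVec_smul]
    have hM11Q : (1 - Rᵀ) * (Q + d⁻¹ • outer b b) + colV (Rᵀ.mulVec p) * rowV b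
        = (1 - Rᵀ) * Q := by
      rw [hRp, colV_mul_rowV, vmv_smul_left]
      have h7 : Matrix.vecMulVec ((Rᵀ - 1).mulVec b) b = (Rᵀ - 1) * Matrix.vecMulVec b b :=
        (mul_vmv _ _ _).symm
      rw [h7, outer, Matrix.mul_add, Matrix.mul_smul]
      have h8 : (1 - Rᵀ) * Matrix.vecMulVec b b = -((Rᵀ - 1) * Matrix.vecMulVec b b) := by
        rw [← neg_mul, neg_sub]
      rw [h8, smul_neg]
      abel
    rw [hM11Q, Matrix.transpose_mul, Matrix.transpose_sub, Matrix.transpose_one,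
      Matrix.transpose_transpose, hsym]
    noncomm_ring
  constructor
  · rintro ⟨h1, h2, -, -⟩
    have hp := h12.mp h2
    refine ⟨?_, hp⟩
    have h1' : ((1 - Rᵀ) * (Q + d⁻¹ • outer b b) + colV (Rᵀ.mulVec p) * rowV b) -
        ((1 - Rᵀ) * (Q + d⁻¹ • outer b b) + colV (Rᵀ.mulVec p) * rowV b)ᵀ = 0 := by
      rcases smul_eq_zero.mp h1 with h | h
      · norm_num at h
      · exact h
    rw [key2 hp] at h1'
    exact (sub_eq_zero.mp h1').symm
  · rintro ⟨hc, hp⟩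
    refine ⟨?_, h12.mpr hp, rfl, rfl⟩
    rw [smul_eq_zero]; right
    rw [key2 hp, hc, sub_self]

end AuxLemmas

theorem stmt7 (Q : M3) (hsym : Qᵀ = Q) (hpsd : ∀ x : V3, 0 ≤ x ⬝ᵥ Q.mulVec x)
    (hpd : ∀ x : V3, x ≠ 0 →
      0 < x ⬝ᵥ Matrix.mulVec ((1 / 2 : ℝ) • (Q.trace • (1 : M3) - Q)) x)
    (b : V3) (d : ℝ) (hd : 0 < d)
    (A : M4) (hA : A = Matrix.fromBlocks (Q + d⁻¹ • outer b b) (colV b) (rowV b)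
      (Matrix.of fun _ _ => d)) :
    ∀ (R : M3) (p : V3), isRot R →
      (Pproj ((1 - (SE3mat R p)⁻¹) * A) = 0 ↔
        (SE3mat R p = 1 ∨ ∃ (v : V3) (lam : ℝ), v ⬝ᵥ v = 1 ∧ Q.mulVec v = lam • v ∧
          R = (2 : ℝ) • outer v v - 1 ∧ p = (1 - R).mulVec (d⁻¹ • b))) := by
  intro R p hRot
  obtain ⟨hR, hdet⟩ := hRot
  rw [hA, key_iff Q hsym b d hd R p hR]
  constructor
  · rintro ⟨hc, hp⟩
    rcases classify Q hsym hpd R hR hdet hc with h1 | ⟨v, lam, hv1, hev, hRf⟩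
    · left
      rw [h1, sub_self, Matrix.zero_mulVec] at hp
      rw [SE3mat, h1, hp]
      have hc0 : colV (0 : V3) = 0 := by ext i j; simp [colV]
      rw [hc0]
      exact Matrix.fromBlocks_one
    · right
      exact ⟨v, lam, hv1, hev, by rw [outer]; exact hRf, hp⟩
  · rintro (h1 | ⟨v, lam, hv1, hev, hRf, hp⟩)
    · have hR1 : R = 1 := by
        have h2 := congrArg Matrix.toBlocks₁₁ h1
        rw [SE3mat, Matrix.toBlocks_fromBlocks₁₁,
          ← Matrix.fromBlocks_one (l := Fin 3) (m := Fin 1) (α := ℝ),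
          Matrix.toBlocks_fromBlocks₁₁] at h2
        exact h2
      have hp0 : p = 0 := by
        have h2 := congrArg Matrix.toBlocks₁₂ h1
        rw [SE3mat, Matrix.toBlocks_fromBlocks₁₂,
          ← Matrix.fromBlocks_one (l := Fin 3) (m := Fin 1) (α := ℝ),
          Matrix.toBlocks_fromBlocks₁₂] at h2
        exact colV_eq_zero.mp h2
      constructor
      · rw [hR1, Matrix.transpose_one, one_mul, mul_one]
      · rw [hp0, hR1, sub_self, Matrix.zero_mulVec]
    · refine ⟨?_, hp⟩
      have hRsym : Rᵀ = R := by
        rw [hRf, outer, Matrix.transpose_sub, Matrix.transpose_smul, Matrix.transpose_one,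
          vmv_transpose]
      rw [hRsym, hRf, outer]
      rw [Matrix.sub_mul, Matrix.mul_sub, one_mul, mul_one, Matrix.smul_mul, Matrix.mul_smul]
      rw [mul_vmv, vmv_mul, hsym, hev, vmv_smul_left, vmv_smul_right]
end
end

section
/- Let Q be a symmetric positive semidefinite 3×3 real matrix such that ½(tr(Q) I₃ − Q) is positive definite, let b ∈ ℝ³, d > 0, and set 𝔸 := [Q + b bᵀ/d, b; bᵀ, d]. Define U(g) := ½ tr((I₄ − g) 𝔸 (I₄ − g)ᵀ). Then there exist constants α₁, α₂ > 0 such that for every g ∈ SE(3), α₁ ‖I₄ − g‖_F² ≤ U(g) ≤ α₂ ‖I₄ − g‖_F². -/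
open Matrix BigOperators

noncomputable section

/-! ### Auxiliary lemmas for STATEMENT 9 -/

lemma sq3_nonneg' (x : V3) : 0 ≤ sq3 x := Finset.sum_nonneg fun _ _ => sq_nonneg _

lemma cs3' (x y : V3) : (x ⬝ᵥ y) ^ 2 ≤ sq3 x * sq3 y := by
  simp only [sq3, dotProduct, Fin.sum_univ_three]
  nlinarith [sq_nonneg (x 0 * y 1 - x 1 * y 0), sq_nonneg (x 0 * y 2 - x 2 * y 0),
    sq_nonneg (x 1 * y 2 - x 2 * y 1)]

lemma sq3_smul' (c : ℝ) (x : V3) : sq3 (c • x) = c ^ 2 * sq3 x := by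
  simp [sq3, Finset.mul_sum, mul_pow]

lemma sq3_eq_zero' {x : V3} (h : sq3 x = 0) : x = 0 := by
  funext i
  have h1 : ∀ j ∈ Finset.univ, (0:ℝ) ≤ x j ^ 2 := fun j _ => sq_nonneg _
  have := (Finset.sum_eq_zero_iff_of_nonneg h1).mp h i (Finset.mem_univ i)
  simpa [pow_eq_zero_iff] using this

lemma qf_smul' (A : M3) (c : ℝ) (x : V3) :
    (c • x) ⬝ᵥ A.mulVec (c • x) = c ^ 2 * (x ⬝ᵥ A.mulVec x) := by
  rw [Matrix.mulVec_smul, smul_dotProduct, dotProduct_smul]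
  simp only [smul_eq_mul]; ring

lemma exists_lambda' (P : M3) (hP : ∀ x : V3, x ≠ 0 → 0 < x ⬝ᵥ P.mulVec x) :
    ∃ l : ℝ, 0 < l ∧ ∀ x : V3, l * sq3 x ≤ x ⬝ᵥ P.mulVec x := by
  have hcont : Continuous fun x : V3 => x ⬝ᵥ P.mulVec x := by
    simp only [dotProduct, Matrix.mulVec]
    fun_prop
  have hcont3 : Continuous sq3 := by
    show Continuous fun x : V3 => ∑ i : Fin 3, x i ^ 2
    fun_prop
  set K : Set V3 := {x | sq3 x = 1} with hK
  have hKc : IsCompact K := by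
    have hclosed : IsClosed K := isClosed_eq hcont3 continuous_const
    have hbdd : K ⊆ Metric.closedBall 0 1 := by
      intro x hx
      simp only [Metric.mem_closedBall, dist_zero_right]
      rw [pi_norm_le_iff_of_nonneg (by norm_num)]
      intro i
      rw [Real.norm_eq_abs, abs_le]
      have h2 : x i ^ 2 ≤ 1 := by
        have : x i ^ 2 ≤ sq3 x := Finset.single_le_sum (f := fun j => x j ^ 2)
          (fun j _ => sq_nonneg _) (Finset.mem_univ i)
        rw [hx] at this; exact this
      constructor <;> nlinarith
    exact (isCompact_closedBall (0:V3) 1).of_isClosed_subset hclosed hbdd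
  have hne : K.Nonempty := ⟨![1,0,0], by simp [hK, sq3, Fin.sum_univ_three]⟩
  obtain ⟨z, hzK, hzmin⟩ := hKc.exists_isMinOn hne hcont.continuousOn
  have hz1 : sq3 z = 1 := hzK
  have hzne : z ≠ 0 := by
    intro h; rw [h] at hz1; simp [sq3] at hz1
  refine ⟨z ⬝ᵥ P.mulVec z, hP z hzne, fun x => ?_⟩
  rcases eq_or_ne x 0 with rfl | hx
  · simp [sq3]
  · have hs : 0 < sq3 x := by
      rcases lt_or_eq_of_le (sq3_nonneg' x) with h | h
      · exact h
      · exact absurd (sq3_eq_zero' h.symm) hx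
    set c : ℝ := (Real.sqrt (sq3 x))⁻¹ with hc
    have hsqrt : 0 < Real.sqrt (sq3 x) := Real.sqrt_pos.mpr hs
    have hcy : sq3 (c • x) = 1 := by
      rw [sq3_smul', hc, inv_pow, Real.sq_sqrt hs.le]
      field_simp
    have this2 : z ⬝ᵥ P.mulVec z ≤ (c • x) ⬝ᵥ P.mulVec (c • x) := hzmin hcy
    rw [qf_smul'] at this2
    have hc2 : c ^ 2 = (sq3 x)⁻¹ := by
      rw [hc, inv_pow, Real.sq_sqrt hs.le]
    rw [hc2] at this2
    calc z ⬝ᵥ P.mulVec z * sq3 x ≤ (sq3 x)⁻¹ * (x ⬝ᵥ P.mulVec x) * sq3 x := by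
          apply mul_le_mul_of_nonneg_right this2 hs.le
      _ = x ⬝ᵥ P.mulVec x := by field_simp

lemma rot_adj' (R : M3) (h1 : Rᵀ * R = 1) (h2 : R.det = 1) : R.adjugate = Rᵀ := by
  calc R.adjugate = R.adjugate * (R * Rᵀ) := by
        rw [mul_eq_one_comm.mp h1, mul_one]
    _ = (R.adjugate * R) * Rᵀ := by rw [mul_assoc]
    _ = Rᵀ := by rw [Matrix.adjugate_mul, h2, one_smul, one_mul]

lemma rot_sq' (R : M3) (h1 : Rᵀ * R = 1) (h2 : R.det = 1) :
    R * R = R.trace • R - R.trace • (1:M3) + Rᵀ := by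
  have hadj := rot_adj' R h1 h2
  rw [Matrix.adjugate_fin_three] at hadj
  have c00 : R 1 1 * R 2 2 - R 1 2 * R 2 1 = R 0 0 := by
    simpa using congrFun (congrFun hadj 0) 0
  have c01 : -(R 0 1 * R 2 2) + R 0 2 * R 2 1 = R 1 0 := by
    simpa using congrFun (congrFun hadj 0) 1
  have c02 : R 0 1 * R 1 2 - R 0 2 * R 1 1 = R 2 0 := by
    simpa using congrFun (congrFun hadj 0) 2
  have c10 : -(R 1 0 * R 2 2) + R 1 2 * R 2 0 = R 0 1 := by
    simpa using congrFun (congrFun hadj 1) 0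
  have c11 : R 0 0 * R 2 2 - R 0 2 * R 2 0 = R 1 1 := by
    simpa using congrFun (congrFun hadj 1) 1
  have c12 : -(R 0 0 * R 1 2) + R 0 2 * R 1 0 = R 2 1 := by
    simpa using congrFun (congrFun hadj 1) 2
  have c20 : R 1 0 * R 2 1 - R 1 1 * R 2 0 = R 0 2 := by
    simpa using congrFun (congrFun hadj 2) 0
  have c21 : -(R 0 0 * R 2 1) + R 0 1 * R 2 0 = R 1 2 := by
    simpa using congrFun (congrFun hadj 2) 1
  have c22 : R 0 0 * R 1 1 - R 0 1 * R 1 0 = R 2 2 := by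
    simpa using congrFun (congrFun hadj 2) 2
  ext i j
  simp only [Matrix.mul_apply, Fin.sum_univ_three, Matrix.add_apply, Matrix.sub_apply,
    Matrix.smul_apply, Matrix.transpose_apply, Matrix.trace_fin_three, smul_eq_mul]
  fin_cases i <;> fin_cases j <;> simp [Matrix.one_apply] <;>
    [linear_combination (-1:ℝ) * c11 - c22; linear_combination c01; linear_combination c02;
     linear_combination c10; linear_combination (-1:ℝ) * c00 - c22; linear_combination c12;
     linear_combination c20; linear_combination c21; linear_combination (-1:ℝ) * c00 - c11]

lemma frob3_nonneg' (M : M3) : 0 ≤ frob3 M :=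
  Finset.sum_nonneg fun _ _ => Finset.sum_nonneg fun _ _ => sq_nonneg _

lemma frob3_eq_zero' {M : M3} (h : frob3 M = 0) : M = 0 := by
  ext i j
  have h1 : ∀ i ∈ Finset.univ, (0:ℝ) ≤ ∑ j, M i j ^ 2 :=
    fun i _ => Finset.sum_nonneg fun j _ => sq_nonneg _
  have h2 := (Finset.sum_eq_zero_iff_of_nonneg h1).mp h i (Finset.mem_univ i)
  have h3 : ∀ j ∈ Finset.univ, (0:ℝ) ≤ M i j ^ 2 := fun j _ => sq_nonneg _
  have h4 := (Finset.sum_eq_zero_iff_of_nonneg h3).mp h2 j (Finset.mem_univ j)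
  simpa [pow_eq_zero_iff] using h4

lemma trace_transpose_mul_self' (E : M3) : (Eᵀ * E).trace = frob3 E := by
  simp only [Matrix.trace, Matrix.diag, Matrix.mul_apply, Matrix.transpose_apply, frob3,
    Fin.sum_univ_three, sq]
  ring

lemma trace_gram' (A F : M3) (h : ∀ x : V3, 0 ≤ x ⬝ᵥ A.mulVec x) :
    0 ≤ (A * (F * Fᵀ)).trace := by
  have key : (A * (F * Fᵀ)).trace =
      ∑ j : Fin 3, (fun i => F i j) ⬝ᵥ A.mulVec (fun i => F i j) := by
    simp only [Matrix.trace, Matrix.diag, Matrix.mul_apply, Matrix.transpose_apply,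
      dotProduct, Matrix.mulVec, Fin.sum_univ_three]
    ring
  rw [key]
  exact Finset.sum_nonneg fun j _ => h _

lemma rot_bounds' (Q : M3) (hpsd : ∀ x : V3, 0 ≤ x ⬝ᵥ Q.mulVec x)
    (lam : ℝ)
    (hlam : ∀ x : V3, lam * sq3 x ≤ x ⬝ᵥ Matrix.mulVec ((1/2 : ℝ) • (Q.trace • (1:M3) - Q)) x)
    (R : M3) (h1 : Rᵀ * R = 1) (h2 : R.det = 1) :
    lam * frob3 (1 - R) ≤ ((1 - R) * Q * (1 - R)ᵀ).trace ∧
      ((1 - R) * Q * (1 - R)ᵀ).trace ≤ (Q.trace / 2) * frob3 (1 - R) := by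
  have h1' : R * Rᵀ = 1 := mul_eq_one_comm.mp h1
  set E : M3 := 1 - R with hE
  set C : M3 := (2:ℝ) • (1:M3) - R - Rᵀ with hC
  have hCE : Eᵀ * E = C := by
    rw [hE, hC, Matrix.transpose_sub, Matrix.transpose_one, sub_mul, mul_sub, mul_sub,
      one_mul, one_mul, mul_one, h1]
    module
  have htrT : (E * Q * Eᵀ).trace = (Q * C).trace := by
    rw [Matrix.trace_mul_cycle, hCE, Matrix.trace_mul_comm]
  have htrC : C.trace = frob3 E := by rw [← hCE, trace_transpose_mul_self']
  have hCsym : Cᵀ = C := by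
    rw [hC]
    simp only [Matrix.transpose_sub, Matrix.transpose_smul, Matrix.transpose_one,
      Matrix.transpose_transpose]
    abel
  rcases eq_or_lt_of_le (frob3_nonneg' E) with hF0 | hFpos
  · have hEz : E = 0 := frob3_eq_zero' hF0.symm
    rw [hEz]
    simp [frob3]
  · set t : ℝ := frob3 E with ht
    have htne : t ≠ 0 := ne_of_gt hFpos
    have htrτ : C.trace = 6 - 2 * R.trace := by
      rw [hC]
      simp [Matrix.trace_sub, Matrix.trace_smul, Matrix.trace_one, Matrix.trace_transpose]
      ring
    have hCsq : C * C = (C.trace / 2) • C := by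
      have hTsq : Rᵀ * Rᵀ = R.trace • Rᵀ - R.trace • (1:M3) + R := by
        have := congrArg Matrix.transpose (rot_sq' R h1 h2)
        simpa [Matrix.transpose_mul, Matrix.transpose_add, Matrix.transpose_sub,
          Matrix.transpose_smul, Matrix.transpose_one] using this
      rw [htrτ, hC]
      simp only [sub_mul, mul_sub, smul_mul_assoc, Matrix.mul_smul, one_mul, mul_one,
        Matrix.smul_mul]
      rw [rot_sq' R h1 h2, hTsq, h1, h1']
      match_scalars <;> ring
    set G : M3 := (1:M3) - (2 / t) • C with hG
    have hGsym : Gᵀ = G := by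
      rw [hG]
      simp [Matrix.transpose_sub, Matrix.transpose_smul, Matrix.transpose_one, hCsym]
    have hGG : G * G = G := by
      rw [hG]
      simp only [sub_mul, mul_sub, one_mul, mul_one, smul_mul_assoc, Matrix.mul_smul,
        Matrix.smul_mul]
      rw [hCsq, htrC]
      match_scalars <;> field_simp <;> ring
    have hGram : G = G * Gᵀ := by rw [hGsym, hGG]
    have htrG : G.trace = 1 := by
      rw [hG, Matrix.trace_sub, Matrix.trace_smul, Matrix.trace_one, htrC]
      simp only [smul_eq_mul]
      field_simp
      norm_num
    have hQGexp : (Q * G).trace = Q.trace - (2 / t) * (Q * C).trace := by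
      rw [hG, mul_sub, mul_one, Matrix.mul_smul, Matrix.trace_sub, Matrix.trace_smul,
        smul_eq_mul]
    have hQG : 0 ≤ (Q * G).trace := by
      rw [hGram]
      exact trace_gram' Q G hpsd
    have hAqf : ∀ x : V3, 0 ≤ x ⬝ᵥ (Q.trace • (1:M3) - Q - (2 * lam) • (1:M3)).mulVec x := by
      intro x
      have hx := hlam x
      simp only [Matrix.sub_mulVec, Matrix.smul_mulVec, Matrix.one_mulVec,
        dotProduct_sub, dotProduct_smul, smul_eq_mul] at hx ⊢
      have hone : x ⬝ᵥ x = sq3 x := by simp [dotProduct, sq3, sq]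
      rw [hone] at hx ⊢
      linarith
    have hAG : 0 ≤ ((Q.trace • (1:M3) - Q - (2 * lam) • (1:M3)) * G).trace := by
      rw [hGram]
      exact trace_gram' _ G hAqf
    have hAGexp : ((Q.trace • (1:M3) - Q - (2 * lam) • (1:M3)) * G).trace
        = Q.trace * G.trace - (Q * G).trace - 2 * lam * G.trace := by
      rw [sub_mul, sub_mul, Matrix.smul_mul, Matrix.smul_mul, one_mul, Matrix.trace_sub,
        Matrix.trace_sub, Matrix.trace_smul, Matrix.trace_smul]
      simp [smul_eq_mul]
    rw [hAGexp, htrG] at hAG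
    rw [hQGexp] at hQG hAG
    rw [htrT]
    constructor
    · have h5 : 2 * lam ≤ (2 / t) * (Q * C).trace := by linarith
      have := mul_le_mul_of_nonneg_left h5 (le_of_lt (half_pos hFpos))
      calc lam * t = (t/2) * (2 * lam) := by ring
        _ ≤ (t/2) * ((2/t) * (Q * C).trace) := this
        _ = (Q * C).trace := by field_simp
    · have h5 : (2 / t) * (Q * C).trace ≤ Q.trace := by linarith
      have := mul_le_mul_of_nonneg_left h5 (le_of_lt (half_pos hFpos))
      calc (Q * C).trace = (t/2) * ((2/t) * (Q * C).trace) := by field_simp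
        _ ≤ (t/2) * Q.trace := this
        _ = Q.trace / 2 * t := by ring

lemma one_sub_SE3' (R : M3) (p : V3) :
    (1 : M4) - SE3mat R p = Matrix.fromBlocks (1 - R) (colV (fun i => -p i)) 0 0 := by
  rw [SE3mat, ← Matrix.fromBlocks_one]
  ext (i | i) (j | j) <;>
    simp [Matrix.fromBlocks, Matrix.sub_apply, colV]

lemma frob4_fromBlocks' (E : M3) (q : V3) :
    frob4 (Matrix.fromBlocks E (colV q) 0 0) = frob3 E + sq3 q := by
  simp [frob4, frob3, sq3, Fintype.sum_sum_type, Matrix.fromBlocks, colV, Fin.sum_univ_one]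
  rw [Finset.sum_add_distrib]

set_option maxHeartbeats 1000000 in
lemma trace_block' (E : M3) (q b : V3) (Q : M3) (d : ℝ) (hd : d ≠ 0) :
    (((Matrix.fromBlocks E (colV q) 0 0 : M4)) *
      ((Matrix.fromBlocks (Q + d⁻¹ • outer b b) (colV b) (rowV b) (Matrix.of fun _ _ => d) : M4)) *
      ((Matrix.fromBlocks E (colV q) 0 0 : M4))ᵀ).trace
    = (E * Q * Eᵀ).trace + d⁻¹ * sq3 (E.mulVec b + d • q) := by
  rw [Matrix.fromBlocks_transpose, Matrix.fromBlocks_multiply, Matrix.fromBlocks_multiply]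
  have htr : ∀ (A : M3) (B : Matrix (Fin 3) (Fin 1) ℝ) (C' : Matrix (Fin 1) (Fin 3) ℝ)
      (D : Matrix (Fin 1) (Fin 1) ℝ),
      (Matrix.fromBlocks A B C' D).trace = A.trace + D.trace := by
    intro A B C' D
    simp [Matrix.trace, Matrix.diag, Fintype.sum_sum_type, Matrix.fromBlocks]
  rw [htr]
  simp only [Matrix.trace, Matrix.diag, Matrix.mul_apply, Matrix.add_apply,
    Matrix.transpose_apply, Matrix.smul_apply, Matrix.zero_apply, Matrix.mulVec,
    dotProduct, sq3, outer, Matrix.vecMulVec_apply, colV, rowV, Matrix.of_apply,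
    Pi.add_apply, Pi.smul_apply, smul_eq_mul, Fin.sum_univ_three, Fin.sum_univ_one,
    Fin.sum_univ_succ, Finset.univ_unique, Finset.sum_const, Fin.default_eq_zero]
  simp only [Finset.sum_singleton, Finset.card_singleton, Fin.succ_zero_eq_one,
    Fin.succ_one_eq_two, Nat.cast_one, one_smul]
  field_simp
  ring

lemma lower_ineq' (lam d β F S W T : ℝ) (hlam : 0 < lam) (hd : 0 < d) (hβ : 0 ≤ β)
    (hF : 0 ≤ F) (hS : 0 ≤ S) (hW : 0 ≤ W) (hlow : lam * F ≤ T)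
    (hqW : d^2*S ≤ 2*W + 2*(F*β)) :
    min ((lam/2)/(1+2*β/d^2)) (d/4) * (F + S) ≤ 1/2 * (T + d⁻¹ * W) := by
  set a := min ((lam/2)/(1+2*β/d^2)) (d/4) with ha
  have hden : (0:ℝ) < 1 + 2*β/d^2 := by positivity
  have hden2 : (0:ℝ) < d^2 + 2*β := by positivity
  have ha0 : 0 < a := lt_min (by positivity) (by positivity)
  have ha2 : a ≤ d/4 := min_le_right _ _
  have heq : (lam/2)/(1+2*β/d^2) = lam*d^2/(2*(d^2+2*β)) := by
    field_simp
  have ha1 : a ≤ lam*d^2/(2*(d^2+2*β)) := heq ▸ min_le_left _ _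
  have haprod : a*(d^2+2*β) ≤ lam*d^2/2 := by
    rw [← le_div_iff₀ hden2]
    calc a ≤ lam*d^2/(2*(d^2+2*β)) := ha1
      _ = lam*d^2/2/(d^2+2*β) := by rw [div_div]
  have hgoal : 2*d^2*(a*F) + 2*d^2*(a*S) ≤ d^2*T + d*W := by
    nlinarith [mul_le_mul_of_nonneg_left hqW ha0.le,
      mul_le_mul_of_nonneg_right ha2 hW,
      mul_le_mul_of_nonneg_right haprod (by linarith : (0:ℝ) ≤ 2*F),
      mul_le_mul_of_nonneg_left hlow (sq_nonneg d)]
  rw [← sub_nonneg]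
  have hrw : 1/2 * (T + d⁻¹ * W) - a*(F+S)
      = (d^2*T + d*W - (2*d^2*(a*F) + 2*d^2*(a*S)))/(2*d^2) := by
    field_simp
  rw [hrw]
  apply div_nonneg (by linarith) (by positivity)

lemma upper_ineq' (c d β F S W T : ℝ) (hd : 0 < d) (hβ : 0 ≤ β)
    (hF : 0 ≤ F) (hS : 0 ≤ S) (hW : 0 ≤ W) (hup : T ≤ c/2*F)
    (hW2 : W ≤ 2*(F*β) + 2*(d^2*S)) :
    1/2 * (T + d⁻¹ * W) ≤ max (c/4 + β/d) d * (F + S) := by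
  set m := max (c/4 + β/d) d with hm
  have hm1 : c/4 + β/d ≤ m := le_max_left _ _
  have hm2 : d ≤ m := le_max_right _ _
  have hm1d : c/4*d + β ≤ m*d := by
    have h := mul_le_mul_of_nonneg_right hm1 hd.le
    have hb : (c/4 + β/d)*d = c/4*d + β := by field_simp
    linarith [hb ▸ h]
  have hgoal : d*T + W ≤ 2*d*(m*F) + 2*d*(m*S) := by
    nlinarith [mul_le_mul_of_nonneg_right hm1d (by linarith : (0:ℝ) ≤ 2*F),
      mul_le_mul_of_nonneg_right hm2 (by positivity : (0:ℝ) ≤ 2*d*S),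
      mul_le_mul_of_nonneg_left hup hd.le, hW2]
  rw [← sub_nonneg]
  have hrw : m*(F+S) - 1/2 * (T + d⁻¹ * W)
      = ((2*d*(m*F) + 2*d*(m*S)) - (d*T + W))/(2*d) := by
    field_simp
  rw [hrw]
  apply div_nonneg (by linarith) (by positivity)

lemma sq3_add_le' (x y : V3) : sq3 (x + y) ≤ 2*sq3 x + 2*sq3 y := by
  simp only [sq3, Fin.sum_univ_three, Pi.add_apply]
  nlinarith [sq_nonneg (x 0 - y 0), sq_nonneg (x 1 - y 1), sq_nonneg (x 2 - y 2)]

lemma sq3_sub_le' (x y : V3) : sq3 (x - y) ≤ 2*sq3 x + 2*sq3 y := by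
  simp only [sq3, Fin.sum_univ_three, Pi.sub_apply]
  nlinarith [sq_nonneg (x 0 + y 0), sq_nonneg (x 1 + y 1), sq_nonneg (x 2 + y 2)]

lemma sq3_mulVec_le' (M : M3) (x : V3) : sq3 (M.mulVec x) ≤ frob3 M * sq3 x := by
  have key : sq3 (M.mulVec x) = ∑ i : Fin 3, ((fun j => M i j) ⬝ᵥ x)^2 := by
    simp [sq3, Matrix.mulVec, dotProduct]
  rw [key, frob3, Finset.sum_mul]
  apply Finset.sum_le_sum
  intro i _
  have := cs3' (fun j => M i j) x
  simpa [sq3] using this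

theorem stmt9 (Q : M3) (hsym : Qᵀ = Q) (hpsd : ∀ x : V3, 0 ≤ x ⬝ᵥ Q.mulVec x)
    (hpd : ∀ x : V3, x ≠ 0 →
      0 < x ⬝ᵥ Matrix.mulVec ((1 / 2 : ℝ) • (Q.trace • (1 : M3) - Q)) x)
    (b : V3) (d : ℝ) (hd : 0 < d)
    (A : M4) (hA : A = Matrix.fromBlocks (Q + d⁻¹ • outer b b) (colV b) (rowV b)
      (Matrix.of fun _ _ => d)) :
    ∃ α₁ α₂ : ℝ, 0 < α₁ ∧ 0 < α₂ ∧ ∀ g : M4, inSE3 g →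
      α₁ * frob4 (1 - g) ≤ (1 / 2 : ℝ) * ((1 - g) * A * (1 - g)ᵀ).trace ∧
      (1 / 2 : ℝ) * ((1 - g) * A * (1 - g)ᵀ).trace ≤ α₂ * frob4 (1 - g) := by
  obtain ⟨lam, hlam0, hlam⟩ :=
    exists_lambda' ((1 / 2 : ℝ) • (Q.trace • (1 : M3) - Q)) hpd
  have hβ : 0 ≤ sq3 b := sq3_nonneg' b
  have hden : (0:ℝ) < 1 + 2*(sq3 b)/d^2 := by
    have : (0:ℝ) ≤ 2*(sq3 b)/d^2 := by positivity
    linarith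
  refine ⟨min ((lam/2)/(1+2*(sq3 b)/d^2)) (d/4), max (Q.trace/4 + (sq3 b)/d) d,
    lt_min (div_pos (by linarith) hden) (by linarith),
    lt_of_lt_of_le hd (le_max_right _ _), ?_⟩
  intro g hg
  obtain ⟨R, p, ⟨h1, h2⟩, rfl⟩ := hg
  rw [hA, one_sub_SE3' R p, trace_block' (1 - R) (fun i => -p i) b Q d (ne_of_gt hd),
    frob4_fromBlocks']
  obtain ⟨hlow, hup⟩ := rot_bounds' Q hpsd lam hlam R h1 h2
  have hqW : d^2 * sq3 (fun i => -p i) ≤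
      2 * sq3 ((1-R).mulVec b + d • (fun i => -p i)) + 2 * (frob3 (1-R) * sq3 b) := by
    have h3 : sq3 (d • (fun i => -p i : V3)) = d^2 * sq3 (fun i => -p i) :=
      sq3_smul' d _
    have h4 : (d • (fun i => -p i : V3)) =
        ((1-R).mulVec b + d • (fun i => -p i : V3)) - (1-R).mulVec b := by
      rw [add_sub_cancel_left]
    have h5 := sq3_sub_le' ((1-R).mulVec b + d • (fun i => -p i : V3)) ((1-R).mulVec b)
    rw [← h4, h3] at h5
    have h6 := sq3_mulVec_le' (1-R) b
    linarith
  have hW2 : sq3 ((1-R).mulVec b + d • (fun i => -p i)) ≤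
      2 * (frob3 (1-R) * sq3 b) + 2 * (d^2 * sq3 (fun i => -p i)) := by
    have h5 := sq3_add_le' ((1-R).mulVec b) (d • (fun i => -p i : V3))
    have h6 := sq3_mulVec_le' (1-R) b
    have h3 : sq3 (d • (fun i => -p i : V3)) = d^2 * sq3 (fun i => -p i) :=
      sq3_smul' d _
    linarith
  constructor
  · exact lower_ineq' lam d (sq3 b) (frob3 (1-R)) (sq3 (fun i => -p i))
      (sq3 ((1-R).mulVec b + d • (fun i => -p i))) (((1-R) * Q * (1-R)ᵀ).trace)
      hlam0 hd hβ (frob3_nonneg' _) (sq3_nonneg' _) (sq3_nonneg' _) hlow hqW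
  · exact upper_ineq' Q.trace d (sq3 b) (frob3 (1-R)) (sq3 (fun i => -p i))
      (sq3 ((1-R).mulVec b + d • (fun i => -p i))) (((1-R) * Q * (1-R)ᵀ).trace)
      hd hβ (frob3_nonneg' _) (sq3_nonneg' _) (sq3_nonneg' _) hup hW2
end
end
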